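/- arXiv:2303.12247 — 2 statements merged into one kernel-verified Lean document; each statement's English description precedes it below -/
import Mathlib

section
/- If a randomized mechanism M satisfies (α, ε)-Rényi differential privacy for some α > 1, then for any δ ∈ (0,1), M satisfies (ε + log(1/δ)/(α−1), δ)-differential privacy. -/
open Finset Real

/-- **RDP to DP conversion.** If a randomized mechanism `M` (with discrete output
distributions over a finite type `Ω`) satisfies `(α, ε)`-Rényi differential privacy
for some `α > 1`, then for any `δ ∈ (0,1)`, `M` satisfies
`(ε + log(1/δ)/(α−1), δ)`-differential privacy. -/
theorem rdp_to_dp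
    {Dset : Type*} {Ω : Type*} [Fintype Ω]
    (Neigh : Dset → Dset → Prop)
    (M : Dset → Ω → ℝ)
    (hpos : ∀ D x, 0 ≤ M D x)
    (hsum : ∀ D, ∑ x, M D x = 1)
    (hac : ∀ D D', Neigh D D' → ∀ x, M D' x = 0 → M D x = 0)
    (α ε : ℝ) (hα : 1 < α)
    (hRDP : ∀ D D', Neigh D D' →
      (1 / (α - 1)) * Real.log (∑ x, M D x ^ α * M D' x ^ (1 - α)) ≤ ε)
    (δ : ℝ) (hδ : δ ∈ Set.Ioo (0 : ℝ) 1) :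
    ∀ D D', Neigh D D' → ∀ S : Finset Ω,
      ∑ x ∈ S, M D x ≤
        Real.exp (ε + Real.log (1 / δ) / (α - 1)) * ∑ x ∈ S, M D' x + δ := by
  classical
  intro D D' hN S
  obtain ⟨hδ0, hδ1⟩ := hδ
  set ε' : ℝ := ε + Real.log (1 / δ) / (α - 1) with hε'
  have hα1 : (0:ℝ) < α - 1 := by linarith
  set K : ℝ := ∑ x, M D x ^ α * M D' x ^ (1 - α) with hKdef
  have hKnn : ∀ x : Ω, 0 ≤ M D x ^ α * M D' x ^ (1 - α) := fun x =>
    mul_nonneg (Real.rpow_nonneg (hpos D x) _) (Real.rpow_nonneg (hpos D' x) _)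
  have hKpos : 0 < K := by
    obtain ⟨x, hx⟩ : ∃ x, 0 < M D x := by
      by_contra h
      push_neg at h
      have h0 : ∑ x, M D x = 0 :=
        Finset.sum_eq_zero fun x _ => le_antisymm (h x) (hpos D x)
      rw [hsum D] at h0; linarith
    have hq : 0 < M D' x := by
      rcases (hpos D' x).lt_or_eq with h | h
      · exact h
      · exact absurd (hac D D' hN x h.symm) (by linarith)
    have hterm : 0 < M D x ^ α * M D' x ^ (1 - α) :=
      mul_pos (Real.rpow_pos_of_pos hx _) (Real.rpow_pos_of_pos hq _)
    exact lt_of_lt_of_le hterm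
      (Finset.single_le_sum (fun i _ => hKnn i) (Finset.mem_univ x))
  have hKle : K ≤ Real.exp ((α - 1) * ε) := by
    have h := hRDP D D' hN
    have h2 : (α - 1) * ((1 / (α - 1)) * Real.log K) ≤ (α - 1) * ε :=
      mul_le_mul_of_nonneg_left h hα1.le
    rw [← mul_assoc, mul_one_div_cancel hα1.ne', one_mul] at h2
    calc K = Real.exp (Real.log K) := (Real.exp_log hKpos).symm
      _ ≤ Real.exp ((α - 1) * ε) := Real.exp_le_exp.2 h2
  -- pointwise bound on the "bad" set
  have hpt : ∀ x, Real.exp ε' * M D' x < M D x →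
      Real.exp ((α - 1) * ε') * M D x ≤ M D x ^ α * M D' x ^ (1 - α) := by
    intro x hx
    have hq : 0 < M D' x := by
      rcases (hpos D' x).lt_or_eq with h | h
      · exact h
      · have hp0 := hac D D' hN x h.symm
        rw [hp0, ← h] at hx
        simp at hx
    have hp : 0 < M D x := lt_of_le_of_lt (by positivity) hx
    have hratio : Real.exp ε' ≤ M D x / M D' x :=
      ((lt_div_iff₀ hq).2 hx).le
    have hp1 : M D x ^ α = M D x * M D x ^ (α - 1) := by
      conv_lhs => rw [show α = 1 + (α - 1) by ring]
      rw [Real.rpow_add hp, Real.rpow_one]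
    have hq1 : M D' x ^ (1 - α) = (M D' x ^ (α - 1))⁻¹ := by
      rw [show (1 - α) = -(α - 1) by ring, Real.rpow_neg hq.le]
    have hrw : M D x ^ α * M D' x ^ (1 - α)
        = M D x * (M D x / M D' x) ^ (α - 1) := by
      rw [hp1, hq1, Real.div_rpow hp.le hq.le]
      ring
    have h3 : Real.exp ε' ^ (α - 1) ≤ (M D x / M D' x) ^ (α - 1) :=
      Real.rpow_le_rpow (Real.exp_pos _).le hratio hα1.le
    rw [hrw, show (α - 1) * ε' = ε' * (α - 1) by ring, Real.exp_mul, mul_comm]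
    exact mul_le_mul_of_nonneg_left h3 hp.le
  set P : Ω → Prop := fun x => Real.exp ε' * M D' x < M D x with hP
  set A : Finset Ω := S.filter P with hA
  have hAδ : ∑ x ∈ A, M D x ≤ δ := by
    have hsumA : Real.exp ((α - 1) * ε') * ∑ x ∈ A, M D x ≤ K := by
      rw [Finset.mul_sum]
      calc ∑ x ∈ A, Real.exp ((α - 1) * ε') * M D x
          ≤ ∑ x ∈ A, M D x ^ α * M D' x ^ (1 - α) :=
            Finset.sum_le_sum fun x hx => hpt x (Finset.mem_filter.1 hx).2
        _ ≤ K := Finset.sum_le_univ_sum_of_nonneg hKnn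
    have h4 : Real.exp ((α - 1) * ε') * ∑ x ∈ A, M D x ≤ Real.exp ((α - 1) * ε) :=
      le_trans hsumA hKle
    have h5 : ∑ x ∈ A, M D x ≤ Real.exp ((α - 1) * ε) / Real.exp ((α - 1) * ε') := by
      rw [le_div_iff₀ (Real.exp_pos _)]
      linarith [h4]
    calc ∑ x ∈ A, M D x ≤ Real.exp ((α - 1) * ε) / Real.exp ((α - 1) * ε') := h5
      _ = δ := by
        rw [← Real.exp_sub]
        have hlog : (α - 1) * ε - (α - 1) * ε' = Real.log δ := by
          rw [hε', one_div, Real.log_inv]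
          field_simp
          ring
        rw [hlog, Real.exp_log hδ0]
  have hB : ∑ x ∈ S.filter (fun x => ¬ P x), M D x
      ≤ Real.exp ε' * ∑ x ∈ S.filter (fun x => ¬ P x), M D' x := by
    rw [Finset.mul_sum]
    refine Finset.sum_le_sum fun x hx => ?_
    have := (Finset.mem_filter.1 hx).2
    simp only [hP, not_lt] at this
    exact this
  have hBq : ∑ x ∈ S.filter (fun x => ¬ P x), M D' x ≤ ∑ x ∈ S, M D' x :=
    Finset.sum_le_sum_of_subset_of_nonneg (Finset.filter_subset _ _)
      (fun x _ _ => hpos D' x)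
  have hsplit : ∑ x ∈ A, M D x + ∑ x ∈ S.filter (fun x => ¬ P x), M D x
      = ∑ x ∈ S, M D x := Finset.sum_filter_add_sum_filter_not S P _
  have hexp : (0:ℝ) ≤ Real.exp ε' := (Real.exp_pos _).le
  nlinarith [mul_le_mul_of_nonneg_left hBq hexp]
end

section
/- Gaussian mechanism RDP for vector queries: if f maps datasets to ℝᵐ with ℓ₂-sensitivity Δ (i.e., ‖f(D) − f(D')‖₂ ≤ Δ for neighboring D, D'), then releasing f(D) + N(0, σ²I_m) satisfies (α, αΔ²/(2σ²))-RDP for all α > 1. -/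
open Real MeasureTheory ProbabilityTheory

lemma gauss_renyi_onedim (μ ν : ℝ) {v : ℝ} (hv : 0 < v) (α : ℝ) :
    ∫ x : ℝ, gaussianPDFReal μ ⟨v, hv.le⟩ x ^ α * gaussianPDFReal ν ⟨v, hv.le⟩ x ^ (1 - α)
      = Real.exp (α * (α - 1) * (μ - ν) ^ 2 / (2 * v)) := by
  have hvne : (⟨v, hv.le⟩ : NNReal) ≠ 0 := by
    exact fun h => hv.ne' (congrArg NNReal.toReal h)
  set b := α * μ + (1 - α) * ν with hb
  have hs : (0:ℝ) < √(2 * π * v) := Real.sqrt_pos.2 (by positivity)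
  have key : ∀ x : ℝ,
      gaussianPDFReal μ ⟨v, hv.le⟩ x ^ α * gaussianPDFReal ν ⟨v, hv.le⟩ x ^ (1 - α)
        = Real.exp (α * (α - 1) * (μ - ν) ^ 2 / (2 * v)) * gaussianPDFReal b ⟨v, hv.le⟩ x := by
    intro x
    simp only [gaussianPDFReal, NNReal.coe_mk]
    rw [Real.mul_rpow (by positivity) (Real.exp_nonneg _),
        Real.mul_rpow (by positivity) (Real.exp_nonneg _),
        ← Real.exp_mul, ← Real.exp_mul]
    have hinv : (√(2 * π * v))⁻¹ ^ α * (√(2 * π * v))⁻¹ ^ (1 - α)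
        = (√(2 * π * v))⁻¹ := by
      rw [← Real.rpow_add (by positivity)]
      norm_num
    calc (√(2 * π * v))⁻¹ ^ α * rexp (-(x - μ) ^ 2 / (2 * v) * α) *
          ((√(2 * π * v))⁻¹ ^ (1 - α) * rexp (-(x - ν) ^ 2 / (2 * v) * (1 - α)))
        = ((√(2 * π * v))⁻¹ ^ α * (√(2 * π * v))⁻¹ ^ (1 - α)) *
          (rexp (-(x - μ) ^ 2 / (2 * v) * α) * rexp (-(x - ν) ^ 2 / (2 * v) * (1 - α))) := by
          ring
      _ = (√(2 * π * v))⁻¹ *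
          rexp (-(x - μ) ^ 2 / (2 * v) * α + -(x - ν) ^ 2 / (2 * v) * (1 - α)) := by
          rw [hinv, ← Real.exp_add]
      _ = rexp (α * (α - 1) * (μ - ν) ^ 2 / (2 * v)) *
          ((√(2 * π * v))⁻¹ * rexp (-(x - b) ^ 2 / (2 * v))) := by
          have : -(x - μ) ^ 2 / (2 * v) * α + -(x - ν) ^ 2 / (2 * v) * (1 - α)
              = α * (α - 1) * (μ - ν) ^ 2 / (2 * v) + -(x - b) ^ 2 / (2 * v) := by
            field_simp
            ring
          rw [this, Real.exp_add]
          ring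
  rw [integral_congr_ae (Filter.Eventually.of_forall key), integral_const_mul,
    integral_gaussianPDFReal_eq_one b hvne, mul_one]

/-- **RDP of the Gaussian mechanism for vector-valued queries.** If `f` maps
datasets to `ℝᵐ` with `ℓ₂`-sensitivity `Δ`, then releasing `f(D) + N(0, σ²I_m)`
(whose output density is the product of one-dimensional Gaussian densities with
means `f(D)_i` and variance `σ²`) satisfies `(α, αΔ²/(2σ²))`-RDP for all `α > 1`. -/
theorem gaussian_mechanism_vector_rdp
    {Dset : Type*} (Neigh : Dset → Dset → Prop)
    (m : ℕ) (f : Dset → Fin m → ℝ) (Δ σ : ℝ) (hσ : 0 < σ) (hΔ : 0 ≤ Δ)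
    (hsens : ∀ D D', Neigh D D' →
      Real.sqrt (∑ i, (f D i - f D' i) ^ 2) ≤ Δ)
    (α : ℝ) (hα : 1 < α) :
    ∀ D D', Neigh D D' →
      (1 / (α - 1)) * Real.log
        (∫ x : Fin m → ℝ,
          (∏ i, gaussianPDFReal (f D i) ⟨σ ^ 2, sq_nonneg σ⟩ (x i)) ^ α *
          (∏ i, gaussianPDFReal (f D' i) ⟨σ ^ 2, sq_nonneg σ⟩ (x i)) ^ (1 - α))
        ≤ α * Δ ^ 2 / (2 * σ ^ 2) := by
  intro D D' hDD'
  have hv : (0:ℝ) < σ ^ 2 := by positivity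
  set S : ℝ := ∑ i, (f D i - f D' i) ^ 2 with hS
  have hSnonneg : 0 ≤ S := Finset.sum_nonneg fun i _ => sq_nonneg _
  have hSle : S ≤ Δ ^ 2 := by
    have h := hsens D D' hDD'
    nlinarith [Real.sq_sqrt hSnonneg, Real.sqrt_nonneg S]
  have hintegrand : ∀ x : Fin m → ℝ,
      (∏ i, gaussianPDFReal (f D i) ⟨σ ^ 2, sq_nonneg σ⟩ (x i)) ^ α *
      (∏ i, gaussianPDFReal (f D' i) ⟨σ ^ 2, sq_nonneg σ⟩ (x i)) ^ (1 - α)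
      = ∏ i, (gaussianPDFReal (f D i) ⟨σ ^ 2, sq_nonneg σ⟩ (x i) ^ α *
          gaussianPDFReal (f D' i) ⟨σ ^ 2, sq_nonneg σ⟩ (x i) ^ (1 - α)) := by
    intro x
    rw [Finset.prod_mul_distrib]
    exact congrArg₂ (· * ·)
      (Real.finset_prod_rpow _ _ (fun i _ => gaussianPDFReal_nonneg _ _ _) α).symm
      (Real.finset_prod_rpow _ _ (fun i _ => gaussianPDFReal_nonneg _ _ _) (1 - α)).symm
  have hint : (∫ x : Fin m → ℝ,
      (∏ i, gaussianPDFReal (f D i) ⟨σ ^ 2, sq_nonneg σ⟩ (x i)) ^ α *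
      (∏ i, gaussianPDFReal (f D' i) ⟨σ ^ 2, sq_nonneg σ⟩ (x i)) ^ (1 - α))
      = Real.exp (α * (α - 1) * S / (2 * σ ^ 2)) := by
    simp_rw [hintegrand]
    refine (MeasureTheory.integral_fintype_prod_eq_prod (ι := Fin m)
      (fun i x => gaussianPDFReal (f D i) ⟨σ ^ 2, sq_nonneg σ⟩ x ^ α *
        gaussianPDFReal (f D' i) ⟨σ ^ 2, sq_nonneg σ⟩ x ^ (1 - α))
        (μ := fun _ => volume)).trans ?_
    have : ∀ i : Fin m, (∫ x : ℝ, gaussianPDFReal (f D i) ⟨σ ^ 2, sq_nonneg σ⟩ x ^ α *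
        gaussianPDFReal (f D' i) ⟨σ ^ 2, sq_nonneg σ⟩ x ^ (1 - α))
        = Real.exp (α * (α - 1) * (f D i - f D' i) ^ 2 / (2 * σ ^ 2)) := fun i =>
      gauss_renyi_onedim (f D i) (f D' i) hv α
    rw [Finset.prod_congr rfl fun i _ => this i, ← Real.exp_sum]
    congr 1
    rw [hS, Finset.mul_sum, Finset.sum_div]
  rw [hint, Real.log_exp]
  have hα1 : 0 < α - 1 := by linarith
  have h1 : (1 / (α - 1)) * (α * (α - 1) * S / (2 * σ ^ 2)) = α * S / (2 * σ ^ 2) := by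
    field_simp
  rw [h1]
  have : α * S ≤ α * Δ ^ 2 := by nlinarith
  exact div_le_div_of_nonneg_right this (by positivity) |>.trans_eq rfl
end
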